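/- For every (u,i) ∈ D and every natural number p, the set V(u,i,p) = {(t,j) ∈ D : t ≼ u, p(t,u) ≥ p and j = (−1)^{ℓ(t,u)} i} is open in the Λ-duplicate D. -/

import Mathlib

/-- An element of Kurepa's tree `Λ`: an injective function `t : α → ω` with countable
ordinal domain `α` and coinfinite range.  The function is represented as a total function
on ordinals which takes the junk value `0` outside of the domain. -/
structure Lambda : Type 1 where
  toFun : Ordinal.{0} → ℕ
  dom : Ordinal.{0}
  countable : dom.card ≤ Cardinal.aleph0
  inj : ∀ β γ, β < dom → γ < dom → toFun β = toFun γ → β = γ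
  coinfinite : {n : ℕ | ∀ β, β < dom → toFun β ≠ n}.Infinite
  junk : ∀ β, ¬ β < dom → toFun β = 0

/-- The tree order on `Λ`: `s ≼ t` iff `t` extends `s`. -/
def Lambda.le (s t : Lambda) : Prop :=
  s.dom ≤ t.dom ∧ ∀ β, β < s.dom → s.toFun β = t.toFun β

/-- The strict tree order on `Λ`. -/
def Lambda.lt (s t : Lambda) : Prop := Lambda.le s t ∧ s ≠ t

/-- `r ≺ s` for `r ∈ Λ ∪ {0}` (`none` plays the role of the extra least element `0`). -/
def precLt : Option Lambda → Lambda → Prop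
  | none, _ => True
  | some r, s => Lambda.lt r s

/-- The interval `(r, t] = {s ∈ Λ : r ≺ s ≼ t}`, with `r ∈ Λ ∪ {0}`. -/
def lamIoc (r : Option Lambda) (t : Lambda) : Set Lambda :=
  {s | precLt r s ∧ Lambda.le s t}

/-- The position of the minimum of `t` on the ordinal interval `[δ, β)`. -/
noncomputable def minPos (t : Ordinal.{0} → ℕ) (δ β : Ordinal.{0}) : Ordinal.{0} :=
  sInf {ξ | δ ≤ ξ ∧ ξ < β ∧ ∀ η, δ ≤ η → η < β → t ξ ≤ t η}

lemma minPos_lt (t : Ordinal.{0} → ℕ) {δ β : Ordinal.{0}} (h : δ < β) : minPos t δ β < β := by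
  have hne : {ξ : Ordinal.{0} | δ ≤ ξ ∧ ξ < β ∧ ∀ η, δ ≤ η → η < β → t ξ ≤ t η}.Nonempty := by
    have h1 : {n : ℕ | ∃ ξ : Ordinal.{0}, δ ≤ ξ ∧ ξ < β ∧ t ξ = n}.Nonempty :=
      ⟨t δ, δ, le_refl _, h, rfl⟩
    obtain ⟨ξ, hξ1, hξ2, hξ3⟩ := Nat.sInf_mem h1
    refine ⟨ξ, hξ1, hξ2, fun η h1' h2' => ?_⟩
    rw [hξ3]
    exact Nat.sInf_le ⟨η, h1', h2', rfl⟩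
  obtain ⟨ξ, hξ⟩ := hne
  calc minPos t δ β ≤ ξ := csInf_le (OrderBot.bddBelow _) hξ
    _ < β := hξ.2.1

/-- The sequence `τ` computed from the starting ordinal `β₀` downwards: `τ` is obtained by
repeatedly passing from `β` to the position of the minimum of `t` on `[δ, β)`, stopping upon
reaching `δ`.  The resulting finite sequence `(β_k, …, β_1)` is recorded as a list in the
order `[β_k, …, β_1]` (so concatenation of the lists corresponds to `⌢`). -/
noncomputable def tauFrom (δ : Ordinal.{0}) (t : Ordinal.{0} → ℕ) : Ordinal.{0} → List Ordinal.{0} :=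
  WellFounded.fix wellFounded_lt
    (fun β IH => if h : δ < β then IH (minPos t δ β) (minPos_lt t h) ++ [minPos t δ β] else [])

/-- The finite sequence `τ(s,t)` of ordinals, for `s ≼ t` in `Λ`. -/
noncomputable def tau (s t : Lambda) : List Ordinal.{0} :=
  tauFrom s.dom t.toFun t.dom

/-- `ℓ(s,t)`, the length of `τ(s,t)`. -/
noncomputable def ell (s t : Lambda) : ℕ := (tau s t).length

/-- The underlying set of the `Λ`-duplicate: `D = Λ × {1, -1}`. -/
abbrev Dup : Type 1 := Lambda × ℤˣ

/-- The basic open sets `W(r,t,i)` of the `Λ`-duplicate. -/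
noncomputable def Wset (r : Option Lambda) (t : Lambda) (i : ℤˣ) : Set Dup :=
  {q | q.1 ∈ lamIoc r t ∧ q.2 = (-1) ^ ell q.1 t * i}

/-- The collection of all basic open sets `W(r,t,i)` with `r ≺ t`. -/
noncomputable def WBasis : Set (Set Dup) :=
  {S | ∃ (r : Option Lambda) (t : Lambda) (i : ℤˣ), precLt r t ∧ S = Wset r t i}

/-- The topology of the `Λ`-duplicate, generated by the basic sets `W(r,t,i)`. -/
noncomputable instance : TopologicalSpace Dup := TopologicalSpace.generateFrom WBasis

/-- `p(s,t)`: the value of `t` at the largest entry `β₁` of `τ(s,t)` when `s ≺ t`,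
and `p(t,t) = ∞`. -/
noncomputable def pval (s t : Lambda) : ℕ∞ :=
  match (tau s t).getLast? with
  | none => (⊤ : ℕ∞)
  | some β => (t.toFun β : ℕ∞)

/-- The sets `V(u,i,p) = {(t,j) ∈ D : t ≼ u, p(t,u) ≥ p, j = (-1)^{ℓ(t,u)} i}`. -/
noncomputable def Vset (u : Lambda) (i : ℤˣ) (p : ℕ) : Set Dup :=
  {q | Lambda.le q.1 u ∧ (p : ℕ∞) ≤ pval q.1 u ∧ q.2 = (-1) ^ ell q.1 u * i}


lemma minPos_mem (t : Ordinal.{0} → ℕ) {δ β : Ordinal.{0}} (h : δ < β) :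
    δ ≤ minPos t δ β ∧ minPos t δ β < β ∧ ∀ η, δ ≤ η → η < β → t (minPos t δ β) ≤ t η := by
  have hne : {ξ : Ordinal.{0} | δ ≤ ξ ∧ ξ < β ∧ ∀ η, δ ≤ η → η < β → t ξ ≤ t η}.Nonempty := by
    have h1 : {n : ℕ | ∃ ξ : Ordinal.{0}, δ ≤ ξ ∧ ξ < β ∧ t ξ = n}.Nonempty :=
      ⟨t δ, δ, le_refl _, h, rfl⟩
    obtain ⟨ξ, hξ1, hξ2, hξ3⟩ := Nat.sInf_mem h1
    refine ⟨ξ, hξ1, hξ2, fun η h1' h2' => ?_⟩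
    rw [hξ3]
    exact Nat.sInf_le ⟨η, h1', h2', rfl⟩
  exact csInf_mem hne

lemma tauFrom_eq (δ : Ordinal.{0}) (f : Ordinal.{0} → ℕ) (β : Ordinal.{0}) :
    tauFrom δ f β =
      if h : δ < β then tauFrom δ f (minPos f δ β) ++ [minPos f δ β] else [] := by
  unfold tauFrom
  exact WellFounded.fix_eq _ _ _

lemma tauFrom_self (δ : Ordinal.{0}) (f : Ordinal.{0} → ℕ) : tauFrom δ f δ = [] := by
  rw [tauFrom_eq, dif_neg (lt_irrefl δ)]

lemma tauFrom_congr (δ : Ordinal.{0}) (f g : Ordinal.{0} → ℕ) :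
    ∀ β, (∀ ξ, δ ≤ ξ → ξ < β → f ξ = g ξ) → tauFrom δ f β = tauFrom δ g β := by
  intro β
  induction β using Ordinal.induction with
  | h β IH =>
    intro hfg
    rw [tauFrom_eq δ f β, tauFrom_eq δ g β]
    by_cases h : δ < β
    · rw [dif_pos h, dif_pos h]
      have hm : minPos f δ β = minPos g δ β := by
        unfold minPos
        congr 1
        ext ξ
        constructor
        · rintro ⟨h1, h2, h3⟩
          exact ⟨h1, h2, fun η hη1 hη2 => by
            rw [← hfg ξ h1 h2, ← hfg η hη1 hη2]; exact h3 η hη1 hη2⟩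
        · rintro ⟨h1, h2, h3⟩
          exact ⟨h1, h2, fun η hη1 hη2 => by
            rw [hfg ξ h1 h2, hfg η hη1 hη2]; exact h3 η hη1 hη2⟩
      rw [hm, IH _ (minPos_lt g h) (fun ξ h1 h2 => hfg ξ h1 (h2.trans (minPos_lt g h)))]
    · rw [dif_neg h, dif_neg h]

lemma tauFrom_append (f : Ordinal.{0} → ℕ) (B δ δ' : Ordinal.{0}) (hδ : δ ≤ δ')
    (hinj : ∀ x y, x < B → y < B → f x = f y → x = y) :
    ∀ β, δ' ≤ β → β ≤ B →
      (∀ γ ∈ tauFrom δ' f β, ∀ ξ, δ ≤ ξ → ξ < δ' → f γ < f ξ) →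
      tauFrom δ f β = tauFrom δ f δ' ++ tauFrom δ' f β := by
  intro β
  induction β using Ordinal.induction with
  | h β IH =>
    intro hβ1 hβ2 hyp
    by_cases h : δ' < β
    · set m' := minPos f δ' β with hm'def
      obtain ⟨hm'1, hm'2, hm'3⟩ := minPos_mem f h
      have heq' : tauFrom δ' f β = tauFrom δ' f m' ++ [m'] := by
        rw [tauFrom_eq, dif_pos h]
      have hm'mem : m' ∈ tauFrom δ' f β := by
        rw [heq']; simp
      have hδβ : δ < β := lt_of_le_of_lt hδ h
      obtain ⟨hm1, hm2, hm3⟩ := minPos_mem f hδβ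
      set m := minPos f δ β with hmdef
      have hmm : m = m' := by
        apply hinj _ _ (lt_of_lt_of_le hm2 hβ2) (lt_of_lt_of_le hm'2 hβ2)
        have h1 : f m ≤ f m' := hm3 m' (hδ.trans hm'1) hm'2
        have h2 : f m' ≤ f m := by
          rcases le_or_gt δ' m with hc | hc
          · exact hm'3 m hc hm2
          · exact le_of_lt (hyp m' hm'mem m hm1 hc)
        exact le_antisymm h1 h2
      have heq : tauFrom δ f β = tauFrom δ f m' ++ [m'] := by
        rw [tauFrom_eq, dif_pos hδβ, ← hmdef, hmm]
      have hIH : tauFrom δ f m' = tauFrom δ f δ' ++ tauFrom δ' f m' := by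
        apply IH m' hm'2 hm'1 (hm'2.le.trans hβ2)
        intro γ hγ ξ hξ1 hξ2
        apply hyp γ _ ξ hξ1 hξ2
        rw [heq']
        exact List.mem_append_left _ hγ
      rw [heq, heq', hIH, List.append_assoc]
    · have : β = δ' := le_antisymm (not_lt.mp h) hβ1
      subst this
      rw [tauFrom_self, List.append_nil]

lemma Lambda.le_refl (s : Lambda) : s.le s := ⟨le_rfl, fun _ _ => rfl⟩

lemma Lambda.le_trans {s t u : Lambda} (h1 : s.le t) (h2 : t.le u) : s.le u :=
  ⟨h1.1.trans h2.1, fun β hβ => (h1.2 β hβ).trans (h2.2 β (lt_of_lt_of_le hβ h1.1))⟩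

lemma Lambda.eq_of_le_of_dom_le {s t : Lambda} (h : s.le t) (h2 : t.dom ≤ s.dom) : s = t := by
  have hd : s.dom = t.dom := le_antisymm h.1 h2
  have hf : s.toFun = t.toFun := by
    funext β
    by_cases hβ : β < s.dom
    · exact h.2 β hβ
    · rw [s.junk β hβ, t.junk β (by rwa [← hd])]
  cases s; cases t
  simp only at hf hd
  subst hf hd
  rfl

lemma Lambda.lt_dom {r s : Lambda} (h : r.lt s) : r.dom < s.dom := by
  rcases lt_or_ge r.dom s.dom with hc | hc
  · exact hc
  · exact absurd (Lambda.eq_of_le_of_dom_le h.1 hc) h.2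

/-- Restriction of `t` to a smaller domain. -/
noncomputable def Lambda.restrict (t : Lambda) (γ : Ordinal.{0}) (h : γ ≤ t.dom) : Lambda where
  toFun ξ := if ξ < γ then t.toFun ξ else 0
  dom := γ
  countable := (Ordinal.card_le_card h).trans t.countable
  inj := fun β β' hβ hβ' heq => by
    simp only [if_pos hβ, if_pos hβ'] at heq
    exact t.inj β β' (lt_of_lt_of_le hβ h) (lt_of_lt_of_le hβ' h) heq
  coinfinite := by
    apply Set.Infinite.mono _ t.coinfinite
    intro n hn β hβ
    simp only [if_pos hβ]
    exact hn β (lt_of_lt_of_le hβ h)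
  junk := fun β hβ => if_neg hβ

lemma Lambda.restrict_lt (t : Lambda) (γ : Ordinal.{0}) (h : γ < t.dom) :
    (t.restrict γ h.le).lt t := by
  refine ⟨⟨h.le, fun β hβ => if_pos hβ⟩, fun he => ?_⟩
  have := congrArg Lambda.dom he
  simp only [Lambda.restrict] at this
  exact absurd this (ne_of_lt h)

lemma foldr_max_spec (g : Ordinal.{0} → ℕ) (p : ℕ) (l : List Ordinal.{0}) :
    p ≤ l.foldr (fun β m => max (g β) m) p ∧
      ∀ γ ∈ l, g γ ≤ l.foldr (fun β m => max (g β) m) p := by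
  induction l with
  | nil => simp
  | cons a l IH =>
    refine ⟨IH.1.trans (le_max_right _ _), fun γ hγ => ?_⟩
    rcases List.mem_cons.mp hγ with h | h
    · subst h; exact le_max_left _ _
    · exact (IH.2 γ h).trans (le_max_right _ _)


/-- For every `(u,i) ∈ D` and every natural `p`, the set `V(u,i,p)` is open in the
`Λ`-duplicate `D`. -/
theorem Vset_isOpen (u : Lambda) (i : ℤˣ) (p : ℕ) : IsOpen (Vset u i p) := by
  rw [isOpen_iff_forall_mem_open]
  rintro ⟨t, j⟩ ⟨htu, hp, hj⟩
  obtain ⟨M, hpM, hMbound⟩ : ∃ M, p ≤ M ∧ ∀ γ ∈ tau t u, u.toFun γ + 1 ≤ M :=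
    ⟨_, (foldr_max_spec (fun β => u.toFun β + 1) p (tau t u)).1,
      (foldr_max_spec (fun β => u.toFun β + 1) p (tau t u)).2⟩
  obtain ⟨r, hrt, hbound⟩ : ∃ r : Option Lambda, precLt r t ∧
      ∀ s : Lambda, precLt r s → ∀ ξ, s.dom ≤ ξ → ξ < t.dom → M ≤ t.toFun ξ := by
    by_cases hF : {ξ : Ordinal.{0} | ξ < t.dom ∧ t.toFun ξ < M}.Nonempty
    · have hfin : {ξ : Ordinal.{0} | ξ < t.dom ∧ t.toFun ξ < M}.Finite := by
        apply Set.Finite.of_finite_image (f := t.toFun)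
        · exact (Set.finite_Iio M).subset (by rintro n ⟨ξ, ⟨h1, h2⟩, rfl⟩; exact h2)
        · intro x hx y hy hxy; exact t.inj x y hx.1 hy.1 hxy
      obtain ⟨γ, hγF, hγmax⟩ := Set.exists_max_image _ id hfin hF
      refine ⟨some (t.restrict γ hγF.1.le), t.restrict_lt γ hγF.1, ?_⟩
      intro s hs ξ hξ1 hξ2
      have hs' : Lambda.lt (t.restrict γ hγF.1.le) s := hs
      have hγs : γ < s.dom := Lambda.lt_dom hs'
      by_contra hc
      push_neg at hc
      have hγξ : ξ ≤ γ := hγmax ξ ⟨hξ2, hc⟩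
      exact absurd (lt_of_lt_of_le hγs hξ1) (not_lt.mpr hγξ)
    · refine ⟨none, trivial, fun s _ ξ hξ1 hξ2 => ?_⟩
      by_contra hc
      exact hF ⟨ξ, hξ2, not_le.mp hc⟩
  refine ⟨Wset r t ((-1) ^ ell t u * i), ?_, ?_, ?_⟩
  · -- subset
    rintro ⟨s, j'⟩ ⟨⟨hrs, hst⟩, hj'⟩
    have hsu : Lambda.le s u := Lambda.le_trans hst htu
    have hconcat : tau s u = tau s t ++ tau t u := by
      have h1 : tauFrom s.dom u.toFun u.dom =
          tauFrom s.dom u.toFun t.dom ++ tauFrom t.dom u.toFun u.dom := by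
        apply tauFrom_append u.toFun u.dom s.dom t.dom hst.1 u.inj u.dom htu.1 le_rfl
        intro γ hγ ξ hξ1 hξ2
        have h2 : u.toFun γ + 1 ≤ M := hMbound γ hγ
        have h3 : M ≤ t.toFun ξ := hbound s hrs ξ hξ1 hξ2
        have h4 : t.toFun ξ = u.toFun ξ := htu.2 ξ hξ2
        omega
      have h2 : tauFrom s.dom u.toFun t.dom = tau s t :=
        tauFrom_congr s.dom u.toFun t.toFun t.dom (fun ξ _ hξ => (htu.2 ξ hξ).symm)
      show tauFrom s.dom u.toFun u.dom = _
      rw [h1, h2]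
      rfl
    have hell : ell s u = ell s t + ell t u := by
      unfold ell
      rw [hconcat, List.length_append]
    refine ⟨hsu, ?_, ?_⟩
    · rcases eq_or_ne (tau t u) [] with hnil | hnil
      · rcases eq_or_lt_of_le hsu.1 with hd | hd
        · have hse : s = u := Lambda.eq_of_le_of_dom_le hsu hd.ge
          subst hse
          simp [pval, tau, tauFrom_self]
        · have htd : u.dom ≤ t.dom := by
            by_contra hc
            push_neg at hc
            unfold tau at hnil
            rw [tauFrom_eq, dif_pos hc] at hnil
            simp at hnil
          obtain ⟨hm1, hm2, hm3⟩ := minPos_mem u.toFun hd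
          have hlast : (tau s u).getLast? = some (minPos u.toFun s.dom u.dom) := by
            unfold tau
            rw [tauFrom_eq, dif_pos hd]
            exact List.getLast?_concat
          unfold pval
          rw [hlast]
          have hm2' : minPos u.toFun s.dom u.dom < t.dom := lt_of_lt_of_le hm2 htd
          have h3 : M ≤ t.toFun (minPos u.toFun s.dom u.dom) := hbound s hrs _ hm1 hm2'
          have h4 : t.toFun (minPos u.toFun s.dom u.dom) =
              u.toFun (minPos u.toFun s.dom u.dom) := htu.2 _ hm2'
          have : p ≤ u.toFun (minPos u.toFun s.dom u.dom) := by omega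
          show (p : ℕ∞) ≤ ((u.toFun (minPos u.toFun s.dom u.dom) : ℕ) : ℕ∞)
          exact_mod_cast this
      · have hpe : pval s u = pval t u := by
          unfold pval
          rw [hconcat, List.getLast?_append_of_ne_nil _ hnil]
        rw [hpe]
        exact hp
    · have hellt : ell t t = 0 := by
        unfold ell tau
        rw [tauFrom_self]
        rfl
      show j' = (-1) ^ ell s u * i
      have : j' = (-1) ^ ell s t * ((-1) ^ ell t u * i) := hj'
      rw [this, hell, pow_add, mul_assoc]
  · exact TopologicalSpace.GenerateOpen.basic _ ⟨r, t, _, hrt, rfl⟩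
  · refine ⟨⟨hrt, Lambda.le_refl t⟩, ?_⟩
    have hellt : ell t t = 0 := by
      unfold ell tau
      rw [tauFrom_self]
      rfl
    show j = (-1) ^ ell t t * ((-1) ^ ell t u * i)
    rw [hellt, pow_zero, one_mul]
    exact hj
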